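/- Let (H,α) be a monoidal Hom-Hopf algebra over a commutative ring k and let g◁h := (S(h₁)α⁻¹(g))α(h₂) be the right adjoint Hom-action. Then ad_R turns (H,α) into a right H-module Hom-algebra: for all g,h,l ∈ H, (gh)◁l = (g◁l₁)(h◁l₂) and 1◁h = ε(h)1. -/

import Mathlib

open TensorProduct

noncomputable def tmul2 {k A B C D E F : Type*} [CommRing k]
    [AddCommGroup A] [AddCommGroup B] [AddCommGroup C] [AddCommGroup D]
    [AddCommGroup E] [AddCommGroup F]
    [Module k A] [Module k B] [Module k C] [Module k D] [Module k E] [Module k F]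
    (f : A →ₗ[k] C →ₗ[k] E) (g : B →ₗ[k] D →ₗ[k] F) :
    (A ⊗[k] B) →ₗ[k] (C ⊗[k] D) →ₗ[k] (E ⊗[k] F) :=
  TensorProduct.curry
    ((TensorProduct.map (TensorProduct.lift f) (TensorProduct.lift g)) ∘ₗ
      (TensorProduct.tensorTensorTensorComm k A B C D).toLinearMap)

/-- A monoidal Hom-Hopf algebra over a commutative ring `k`. -/
structure MonHomHopf (k H : Type*) [CommRing k] [AddCommGroup H] [Module k H] where
  α : H ≃ₗ[k] H
  mul : H →ₗ[k] H →ₗ[k] H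
  one : H
  comul : H →ₗ[k] H ⊗[k] H
  counit : H →ₗ[k] k
  S : H →ₗ[k] H
  alpha_mul : ∀ g h, α (mul g h) = mul (α g) (α h)
  alpha_one : α one = one
  hom_assoc : ∀ g h l, mul (α g) (mul h l) = mul (mul g h) (α l)
  mul_one' : ∀ h, mul h one = α h
  one_mul' : ∀ h, mul one h = α h
  comul_alpha : ∀ h, comul (α h)
    = TensorProduct.map α.toLinearMap α.toLinearMap (comul h)
  counit_alpha : ∀ h, counit (α h) = counit h
  hom_coassoc : ∀ h,
    (TensorProduct.assoc k H H H) ((TensorProduct.map comul α.symm.toLinearMap) (comul h))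
      = (TensorProduct.map α.symm.toLinearMap comul) (comul h)
  counit_comul_left : ∀ h,
    (TensorProduct.lid k H) ((TensorProduct.map counit LinearMap.id) (comul h)) = α.symm h
  counit_comul_right : ∀ h,
    (TensorProduct.rid k H) ((TensorProduct.map LinearMap.id counit) (comul h)) = α.symm h
  comul_mul : ∀ g h, comul (mul g h) = tmul2 mul mul (comul g) (comul h)
  comul_one : comul one = one ⊗ₜ[k] one
  counit_mul : ∀ g h, counit (mul g h) = counit g * counit h
  counit_one : counit one = 1
  antipode_left : ∀ h,
    (TensorProduct.lift mul) ((TensorProduct.map S LinearMap.id) (comul h)) = counit h • one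
  antipode_right : ∀ h,
    (TensorProduct.lift mul) ((TensorProduct.map LinearMap.id S) (comul h)) = counit h • one
  S_alpha : ∀ h, S (α h) = α (S h)

/-- The right adjoint Hom-action `g ◁ h = (S(h₁) α⁻¹(g)) α(h₂)`, as a linear map in `h`. -/
noncomputable def MonHomHopf.adRL {k H : Type*} [CommRing k] [AddCommGroup H] [Module k H]
    (A : MonHomHopf k H) (g : H) : H →ₗ[k] H :=
  (TensorProduct.lift
    ((A.mul.comp ((A.mul.flip (A.α.symm g)).comp A.S)).compl₂ A.α.toLinearMap)) ∘ₗ A.comul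

namespace MHaux

variable {k H : Type*} [CommRing k] [AddCommGroup H] [Module k H]

theorem alpha_symm_one (A : MonHomHopf k H) : A.α.symm A.one = A.one := by
  conv_lhs => rw [← A.alpha_one]
  exact A.α.symm_apply_apply _

theorem S_symm (A : MonHomHopf k H) (x : H) : A.S (A.α.symm x) = A.α.symm (A.S x) := by
  have h := A.S_alpha (A.α.symm x)
  rw [A.α.apply_symm_apply] at h
  rw [h, A.α.symm_apply_apply]

theorem mul_symm (A : MonHomHopf k H) (x y : H) :
    A.α.symm (A.mul x y) = A.mul (A.α.symm x) (A.α.symm y) := by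
  have h := A.alpha_mul (A.α.symm x) (A.α.symm y)
  rw [A.α.apply_symm_apply, A.α.apply_symm_apply] at h
  rw [← h, A.α.symm_apply_apply]

theorem L1 (A : MonHomHopf k H) (p b q e : H) :
    A.mul (A.mul p (A.α b)) (A.mul q (A.α e))
      = A.mul (A.mul (A.mul (A.α.symm p) b) q) (A.α (A.α e)) := by
  conv_rhs => rw [← A.hom_assoc, A.alpha_mul, A.α.apply_symm_apply]

theorem L2 (A : MonHomHopf k H) (h u q y : H) :
    A.mul (A.mul u (A.α q)) (A.mul (A.S y) (A.α.symm h))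
      = A.mul (A.mul u (A.mul q (A.S (A.α.symm y)))) h := by
  have e1 : A.mul u (A.α q) = A.α (A.mul (A.α.symm u) q) := by
    rw [A.alpha_mul, A.α.apply_symm_apply]
  have e2 : A.mul u (A.mul q (A.S (A.α.symm y)))
      = A.mul (A.mul (A.α.symm u) q) (A.S y) := by
    conv_lhs => rw [← A.α.apply_symm_apply u]
    rw [A.hom_assoc, ← A.S_alpha, A.α.apply_symm_apply]
  rw [e1, e2, A.hom_assoc, A.α.apply_symm_apply]

theorem L3 (A : MonHomHopf k H) (g h x : H) :
    A.mul (A.S x) (A.α.symm (A.mul g h))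
      = A.mul (A.mul (A.S (A.α.symm x)) (A.α.symm g)) h := by
  rw [mul_symm]
  conv_lhs => rw [← A.α.apply_symm_apply (A.S x)]
  rw [← S_symm, A.hom_assoc, A.α.apply_symm_apply]


variable (k) in
noncomputable def PP (A : MonHomHopf k H) (g : H) : H →ₗ[k] H →ₗ[k] H :=
  (A.mul.comp ((A.mul.flip (A.α.symm g)).comp A.S)).compl₂ A.α.toLinearMap

variable (k) in
noncomputable def C4 (A : MonHomHopf k H) (g h : H) :
    (H ⊗[k] H) ⊗[k] (H ⊗[k] H) →ₗ[k] H :=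
  TensorProduct.lift
    ((A.mul ∘ₗ TensorProduct.lift (PP k A g)).compl₂ (TensorProduct.lift (PP k A h)))

variable (k) in
noncomputable def XX (A : MonHomHopf k H) (g : H) : H →ₗ[k] H →ₗ[k] H :=
  A.mul ∘ₗ ((A.mul.flip (A.α.symm (A.α.symm g))) ∘ₗ (A.S ∘ₗ A.α.symm.toLinearMap))

variable (k) in
noncomputable def WW (A : MonHomHopf k H) (h : H) : H →ₗ[k] H :=
  (A.mul.flip (A.α.symm h)) ∘ₗ A.S

variable (k) in
noncomputable def VV (A : MonHomHopf k H) : H →ₗ[k] H :=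
  A.α.toLinearMap ∘ₗ A.α.toLinearMap

variable (k) in
noncomputable def TT (A : MonHomHopf k H) (h : H) : H →ₗ[k] H →ₗ[k] (H →ₗ[k] H) :=
  (A.mul.compl₂ (WW k A h)).compr₂ (A.mul.compl₂ (VV k A))

variable (k) in
noncomputable def Q2 (A : MonHomHopf k H) (g h : H) : H →ₗ[k] H →ₗ[k] (H →ₗ[k] H →ₗ[k] H) :=
  (XX k A g).compr₂ (TT k A h)

variable (k) in
noncomputable def C4' (A : MonHomHopf k H) (g h : H) :
    (H ⊗[k] H) ⊗[k] (H ⊗[k] H) →ₗ[k] H :=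
  TensorProduct.lift ((TensorProduct.uncurry (RingHom.id k) H H H) ∘ₗ (TensorProduct.lift (Q2 k A g h)))

variable (k) in
noncomputable def thetaM (A : MonHomHopf k H) : H ⊗[k] H →ₗ[k] (H ⊗[k] H) ⊗[k] H :=
  map ((map A.α.symm.toLinearMap LinearMap.id) ∘ₗ A.comul) A.α.symm.toLinearMap

variable (k) in
noncomputable def muS (A : MonHomHopf k H) : H ⊗[k] H →ₗ[k] H :=
  TensorProduct.lift (A.mul.compl₂ A.S)

variable (k) in
noncomputable def inner1 (A : MonHomHopf k H) (g : H) : H →ₗ[k] H :=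
  A.α.toLinearMap ∘ₗ (A.mul.flip (A.α.symm (A.α.symm (A.α.symm g)))) ∘ₗ A.S

variable (k) in
noncomputable def Th (A : MonHomHopf k H) (g h : H) : H →ₗ[k] H →ₗ[k] (H →ₗ[k] H) :=
  ((A.mul ∘ₗ inner1 k A g).compr₂ (A.mul.flip h)).compr₂ (A.mul.compl₂ (VV k A))

variable (k) in
noncomputable def ThHat (A : MonHomHopf k H) (g h : H) : (H ⊗[k] H) ⊗[k] H →ₗ[k] H :=
  TensorProduct.lift (TensorProduct.lift (Th k A g h))

variable (k) in
noncomputable def NN (A : MonHomHopf k H) (g h : H) : ((H ⊗[k] H) ⊗[k] H) ⊗[k] H →ₗ[k] H :=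
  ThHat k A g h ∘ₗ (map (map LinearMap.id (muS k A)) LinearMap.id)
    ∘ₗ (map (TensorProduct.assoc k H H H).toLinearMap LinearMap.id)

variable (k) in
noncomputable def rho (A : MonHomHopf k H) : H →ₗ[k] (H ⊗[k] H) ⊗[k] H :=
  (map (map A.α.symm.toLinearMap LinearMap.id) LinearMap.id)
    ∘ₗ (TensorProduct.assoc k H H H).symm.toLinearMap
    ∘ₗ (map A.α.symm.toLinearMap A.comul) ∘ₗ A.comul

variable (k) in
noncomputable def Bf (A : MonHomHopf k H) (g h : H) : H →ₗ[k] H →ₗ[k] H :=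
  (A.mul ∘ₗ (A.mul.flip h) ∘ₗ (A.mul.flip (A.α.symm g)) ∘ₗ A.S
    ∘ₗ A.α.symm.toLinearMap).compl₂ A.α.toLinearMap

theorem M1 (A : MonHomHopf k H) (g h : H) :
    TensorProduct.lift ((A.mul.comp (A.adRL g)).compl₂ (A.adRL h))
      = C4 k A g h ∘ₗ (map A.comul A.comul) := by
  apply TensorProduct.ext'
  intro x y
  simp [C4, MonHomHopf.adRL, PP]

theorem M2 (A : MonHomHopf k H) (g h : H) : C4 k A g h = C4' k A g h := by
  apply TensorProduct.ext_fourfold'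
  intro a b c e
  simp only [C4, C4', PP, Q2, TT, XX, WW, VV, lift.tmul, LinearMap.compl₂_apply,
    LinearMap.compr₂_apply, LinearMap.comp_apply, LinearMap.flip_apply,
    TensorProduct.uncurry_apply, LinearEquiv.coe_coe]
  rw [L1 A (A.mul (A.S a) (A.α.symm g)) b (A.mul (A.S c) (A.α.symm h)) e,
    mul_symm, ← S_symm]


theorem M3pure (A : MonHomHopf k H) (g h y z p q : H) :
    C4' k A g h ((A.α p ⊗ₜ[k] A.α q) ⊗ₜ[k] (y ⊗ₜ[k] z))
      = NN k A g h (((A.α.symm p ⊗ₜ[k] q) ⊗ₜ[k] A.α.symm y) ⊗ₜ[k] z) := by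
  simp only [C4', NN, ThHat, Th, Q2, TT, XX, WW, VV, muS, inner1, lift.tmul,
    LinearMap.compl₂_apply, LinearMap.compr₂_apply, LinearMap.comp_apply,
    LinearMap.flip_apply, TensorProduct.uncurry_apply, LinearEquiv.coe_coe,
    map_tmul, assoc_tmul, LinearMap.id_coe, id_eq]
  rw [A.α.symm_apply_apply, A.alpha_mul (A.S (A.α.symm p)), ← A.S_alpha,
    A.α.apply_symm_apply, A.α.apply_symm_apply,
    L2 A h (A.mul (A.S p) (A.α.symm (A.α.symm g))) q y]

theorem M3 (A : MonHomHopf k H) (g h : H) :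
    C4' k A g h ∘ₗ (map (A.comul ∘ₗ A.α.toLinearMap) LinearMap.id)
        ∘ₗ (TensorProduct.assoc k H H H).toLinearMap
      = NN k A g h ∘ₗ (map (thetaM k A) LinearMap.id) := by
  apply TensorProduct.ext_threefold
  intro x y z
  simp only [LinearMap.comp_apply, LinearEquiv.coe_coe, assoc_tmul, map_tmul,
    LinearMap.id_coe, id_eq, thetaM]
  rw [A.comul_alpha x]
  generalize A.comul x = t
  induction t using TensorProduct.induction_on with
  | zero => simp
  | tmul p q => simpa using M3pure A g h y z p q
  | add u v ihu ihv => simp only [map_add, add_tmul, ihu, ihv]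

theorem htheta (A : MonHomHopf k H) : thetaM k A ∘ₗ A.comul = rho k A := by
  apply LinearMap.ext; intro x
  have h1 : thetaM k A = (map (map A.α.symm.toLinearMap LinearMap.id) LinearMap.id)
      ∘ₗ (map A.comul A.α.symm.toLinearMap) := by
    apply TensorProduct.ext'; intro u v; simp [thetaM]
  have h2 : (map A.comul A.α.symm.toLinearMap) (A.comul x)
      = (TensorProduct.assoc k H H H).symm
          ((map A.α.symm.toLinearMap A.comul) (A.comul x)) := by
    rw [← A.hom_coassoc x, LinearEquiv.symm_apply_apply]
  simp only [rho, LinearMap.comp_apply, h1, h2, LinearEquiv.coe_coe]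

theorem aux_assoc (A : MonHomHopf k H) (f : H →ₗ[k] H) (u : H ⊗[k] (H ⊗[k] H)) :
    (map LinearMap.id (muS k A)) ((TensorProduct.assoc k H H H)
      ((map (map f LinearMap.id) LinearMap.id) ((TensorProduct.assoc k H H H).symm u)))
      = (map f (muS k A)) u := by
  induction u using TensorProduct.induction_on with
  | zero => simp
  | tmul a w =>
      induction w using TensorProduct.induction_on with
      | zero => simp [tmul_zero]
      | tmul b c => simp
      | add w1 w2 ih1 ih2 => simp only [tmul_add, map_add, LinearEquiv.map_add, ih1, ih2]
  | add u1 u2 ih1 ih2 => simp only [map_add, LinearEquiv.map_add, ih1, ih2]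

theorem muS_comul (A : MonHomHopf k H) :
    muS k A ∘ₗ A.comul = A.counit.smulRight A.one := by
  apply LinearMap.ext; intro x
  have h1 : muS k A = TensorProduct.lift A.mul ∘ₗ map LinearMap.id A.S := by
    apply TensorProduct.ext'; intro a b; simp [muS]
  simp only [LinearMap.comp_apply, h1, LinearMap.smulRight_apply]
  exact A.antipode_right x

theorem MB (A : MonHomHopf k H) (c : H →ₗ[k] H) (x : H) :
    (map c (A.counit.smulRight A.one)) (A.comul x)
      = (c (A.α.symm x)) ⊗ₜ[k] A.one := by
  have h1 : map c (A.counit.smulRight A.one)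
      = ((mk k H H).flip A.one) ∘ₗ c ∘ₗ (TensorProduct.rid k H).toLinearMap
          ∘ₗ (map LinearMap.id A.counit) := by
    apply TensorProduct.ext'; intro u v
    simp [tmul_smul, smul_tmul, TensorProduct.rid_tmul]
  rw [h1]
  simp only [LinearMap.comp_apply, LinearEquiv.coe_coe]
  rw [A.counit_comul_right x]
  rfl

theorem xieq (A : MonHomHopf k H) (x : H) :
    (map LinearMap.id (muS k A)) ((TensorProduct.assoc k H H H) (rho k A x))
      = (A.α.symm (A.α.symm (A.α.symm x))) ⊗ₜ[k] A.one := by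
  simp only [rho, LinearMap.comp_apply, LinearEquiv.coe_coe]
  rw [aux_assoc]
  rw [← LinearMap.comp_apply, ← TensorProduct.map_comp, muS_comul]
  have := MB A (A.α.symm.toLinearMap ∘ₗ A.α.symm.toLinearMap) x
  simpa using this


theorem M5 (A : MonHomHopf k H) (g h : H) :
    NN k A g h ∘ₗ (map (rho k A) A.α.symm.toLinearMap)
      = TensorProduct.lift (Bf k A g h) := by
  apply TensorProduct.ext'
  intro x y
  simp only [NN, LinearMap.comp_apply, map_tmul, LinearEquiv.coe_coe,
    LinearMap.id_coe, id_eq]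
  rw [xieq]
  simp only [ThHat, Th, Bf, VV, inner1, lift.tmul, LinearMap.compl₂_apply,
    LinearMap.compr₂_apply, LinearMap.comp_apply, LinearMap.flip_apply,
    LinearEquiv.coe_coe]
  simp only [A.mul_one', A.alpha_mul, ← A.S_alpha, A.α.apply_symm_apply]

theorem M6 (A : MonHomHopf k H) (g h : H) :
    TensorProduct.lift (PP k A (A.mul g h)) = TensorProduct.lift (Bf k A g h) := by
  apply TensorProduct.ext'
  intro x y
  simp only [PP, Bf, lift.tmul, LinearMap.compl₂_apply, LinearMap.comp_apply,
    LinearMap.flip_apply, LinearEquiv.coe_coe]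
  rw [L3]

theorem T1 (A : MonHomHopf k H) (l : H) :
    (map A.comul A.comul) (A.comul l)
      = (map (A.comul ∘ₗ A.α.toLinearMap) LinearMap.id)
          ((TensorProduct.assoc k H H H)
            ((map A.comul A.α.symm.toLinearMap) (A.comul l))) := by
  rw [A.hom_coassoc l,
    ← LinearMap.comp_apply (map (A.comul ∘ₗ A.α.toLinearMap) LinearMap.id),
    ← TensorProduct.map_comp]
  have hc : (A.comul ∘ₗ A.α.toLinearMap) ∘ₗ A.α.symm.toLinearMap = A.comul := by
    apply LinearMap.ext; intro w; simp
  rw [hc, LinearMap.id_comp]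

theorem T2 (A : MonHomHopf k H) :
    (map (thetaM k A) LinearMap.id) ∘ₗ (map A.comul A.α.symm.toLinearMap)
      = map (rho k A) A.α.symm.toLinearMap := by
  rw [← TensorProduct.map_comp, htheta, LinearMap.id_comp]

end MHaux

open MHaux

/-- the right adjoint Hom-action makes `(H,α)` a right `H`-module Hom-algebra:
`(g h) ◁ l = (g ◁ l₁)(h ◁ l₂)` and `1 ◁ h = ε(h) 1`. -/
theorem right_adjoint_action_module_algebra {k H : Type*} [CommRing k] [AddCommGroup H]
    [Module k H] (A : MonHomHopf k H) :
    (∀ g h l, A.adRL (A.mul g h) l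
      = TensorProduct.lift ((A.mul.comp (A.adRL g)).compl₂ (A.adRL h)) (A.comul l)) ∧
    (∀ h, A.adRL A.one h = A.counit h • A.one) := by
  constructor
  · intro g h l
    have lhs_eq : A.adRL (A.mul g h) l = TensorProduct.lift (Bf k A g h) (A.comul l) := by
      show TensorProduct.lift (PP k A (A.mul g h)) (A.comul l) = _
      rw [M6]
    rw [lhs_eq, M1, M2]
    simp only [LinearMap.comp_apply]
    rw [T1]
    rw [show C4' k A g h
          ((map (A.comul ∘ₗ A.α.toLinearMap) LinearMap.id)
            ((TensorProduct.assoc k H H H)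
              ((map A.comul A.α.symm.toLinearMap) (A.comul l))))
        = (C4' k A g h ∘ₗ (map (A.comul ∘ₗ A.α.toLinearMap) LinearMap.id)
            ∘ₗ (TensorProduct.assoc k H H H).toLinearMap)
            ((map A.comul A.α.symm.toLinearMap) (A.comul l)) from rfl]
    rw [M3]
    simp only [LinearMap.comp_apply]
    rw [← LinearMap.comp_apply (map (thetaM k A) LinearMap.id), T2]
    rw [← LinearMap.comp_apply (NN k A g h) (map (rho k A) A.α.symm.toLinearMap), M5]
  · intro h
    have h1 : TensorProduct.lift
        ((A.mul.comp ((A.mul.flip (A.α.symm A.one)).comp A.S)).compl₂ A.α.toLinearMap)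
        = A.α.toLinearMap ∘ₗ TensorProduct.lift A.mul ∘ₗ (map A.S LinearMap.id) := by
      apply TensorProduct.ext'
      intro a b
      simp only [lift.tmul, LinearMap.compl₂_apply, LinearMap.comp_apply,
        LinearMap.flip_apply, map_tmul, LinearMap.id_coe, id_eq, LinearEquiv.coe_coe]
      rw [alpha_symm_one, A.mul_one', ← A.alpha_mul]
    show (TensorProduct.lift _ ∘ₗ A.comul) h = _
    rw [LinearMap.comp_apply, h1]
    simp only [LinearMap.comp_apply, LinearEquiv.coe_coe]
    rw [A.antipode_left h, map_smul, A.alpha_one]
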